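/- Let G be a locally compact Hausdorff topological group and let μ be a regular probability measure on G that is algebraically regular in P(G) with Moore–Penrose inverse μ†, i.e., μ ∗ μ† ∗ μ = μ and μ† ∗ μ ∗ μ† = μ†. Suppose the identity e lies in the support S(μ) of μ and every element of S(μ) is of finite order. Then S(μ) is a subgroup of G (closed under the group operation and inversion), and S(μ) = S(μ†). -/

import Mathlib

open MeasureTheory
open scoped ENNReal

/-- The support of a measure: the set of points all of whose open neighbourhoods
have positive measure (equivalently, the smallest closed set of full measure for
regular measures). -/
def msupport {G : Type*} [TopologicalSpace G] [MeasurableSpace G]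
    (μ : Measure G) : Set G :=
  {x | ∀ U : Set G, IsOpen U → x ∈ U → 0 < μ U}

lemma mem_msupport_mconv {G : Type*} [Group G] [TopologicalSpace G] [IsTopologicalGroup G]
    [MeasurableSpace G] [BorelSpace G]
    (μ ν : Measure G) [SFinite ν]
    (hae : AEMeasurable (fun p : G × G => p.1 * p.2) (μ.prod ν))
    {x y : G} (hx : x ∈ msupport μ) (hy : y ∈ msupport ν) :
    x * y ∈ msupport (μ ∗ₘ ν) := by
  intro U hU hxy
  have hcont : Continuous fun p : G × G => p.1 * p.2 := continuous_mul
  have hpre : IsOpen ((fun p : G × G => p.1 * p.2) ⁻¹' U) := hU.preimage hcont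
  have hmem : (x, y) ∈ (fun p : G × G => p.1 * p.2) ⁻¹' U := hxy
  obtain ⟨V, W, hV, hW, hxV, hyW, hVW⟩ := isOpen_prod_iff.mp hpre x y hmem
  have h1 : (μ ∗ₘ ν) U = (μ.prod ν) ((fun p : G × G => p.1 * p.2) ⁻¹' U) := by
    rw [Measure.mconv, Measure.map_apply_of_aemeasurable hae hU.measurableSet]
  have h2 : (μ.prod ν) (V ×ˢ W) ≤ (μ.prod ν) ((fun p : G × G => p.1 * p.2) ⁻¹' U) :=
    measure_mono hVW
  have h3 : (μ.prod ν) (V ×ˢ W) = μ V * ν W := Measure.prod_prod V W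
  have hVpos := hx V hV hxV
  have hWpos := hy W hW hyW
  calc (0 : ℝ≥0∞) < μ V * ν W := ENNReal.mul_pos hVpos.ne' hWpos.ne'
    _ = (μ.prod ν) (V ×ˢ W) := h3.symm
    _ ≤ (μ.prod ν) ((fun p : G × G => p.1 * p.2) ⁻¹' U) := h2
    _ = (μ ∗ₘ ν) U := h1.symm

lemma msupport_nonempty {G : Type*} [TopologicalSpace G] [MeasurableSpace G]
    (μ : Measure G) [IsProbabilityMeasure μ] [μ.Regular] :
    (msupport μ).Nonempty := by
  by_contra h
  rw [Set.not_nonempty_iff_eq_empty] at h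
  have hcov : ∀ x : G, ∃ U : Set G, IsOpen U ∧ x ∈ U ∧ μ U = 0 := by
    intro x
    have hx : x ∉ msupport μ := by rw [h]; exact Set.notMem_empty x
    simp only [msupport, Set.mem_setOf_eq, not_forall] at hx
    obtain ⟨U, hU, hxU, hpos⟩ := hx
    exact ⟨U, hU, hxU, by simpa using hpos⟩
  choose U hUopen hUmem hUnull using hcov
  obtain ⟨K, _, hKcomp, hKpos⟩ :=
    Measure.Regular.innerRegular (μ := μ) isOpen_univ 0 (by simp)
  have hKcover : K ⊆ ⋃ x : G, U x := fun y _ => Set.mem_iUnion.mpr ⟨y, hUmem y⟩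
  obtain ⟨s, hs⟩ := hKcomp.elim_finite_subcover U hUopen hKcover
  have : μ K ≤ μ (⋃ x ∈ s, U x) := measure_mono hs
  have hz : μ (⋃ x ∈ s, U x) = 0 :=
    measure_biUnion_null_iff s.countable_toSet |>.mpr fun x _ => hUnull x
  exact hKpos.ne' (le_antisymm (this.trans hz.le) zero_le)

theorem support_subgroup_of_moorePenrose
    {G : Type*} [Group G] [TopologicalSpace G] [IsTopologicalGroup G]
    [LocallyCompactSpace G] [T2Space G] [MeasurableSpace G] [BorelSpace G]
    (μ μd : Measure G) [IsProbabilityMeasure μ] [IsProbabilityMeasure μd]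
    [μ.Regular] [μd.Regular]
    (h₁ : (μ ∗ₘ μd) ∗ₘ μ = μ) (h₂ : (μd ∗ₘ μ) ∗ₘ μd = μd)
    (he : (1 : G) ∈ msupport μ)
    (hfin : ∀ x ∈ msupport μ, IsOfFinOrder x) :
    (∀ x ∈ msupport μ, ∀ y ∈ msupport μ, x * y ∈ msupport μ) ∧
    (∀ x ∈ msupport μ, x⁻¹ ∈ msupport μ) ∧
    msupport μ = msupport μd := by
  -- measurability of multiplication w.r.t. the relevant product measures
  have hμ0 : μ ≠ 0 := IsProbabilityMeasure.ne_zero μ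
  have hμd0 : μd ≠ 0 := IsProbabilityMeasure.ne_zero μd
  have hae1 : AEMeasurable (fun p : G × G => p.1 * p.2) (μ.prod μd) := by
    by_contra hn
    have : μ ∗ₘ μd = 0 := Measure.map_of_not_aemeasurable hn
    rw [this, Measure.zero_mconv] at h₁
    exact hμ0 h₁.symm
  have hae1' : AEMeasurable (fun p : G × G => p.1 * p.2) ((μ ∗ₘ μd).prod μ) := by
    by_contra hn
    have : (μ ∗ₘ μd) ∗ₘ μ = 0 := Measure.map_of_not_aemeasurable hn
    rw [this] at h₁
    exact hμ0 h₁.symm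
  have hae2 : AEMeasurable (fun p : G × G => p.1 * p.2) (μd.prod μ) := by
    by_contra hn
    have : μd ∗ₘ μ = 0 := Measure.map_of_not_aemeasurable hn
    rw [this, Measure.zero_mconv] at h₂
    exact hμd0 h₂.symm
  have hae2' : AEMeasurable (fun p : G × G => p.1 * p.2) ((μd ∗ₘ μ).prod μd) := by
    by_contra hn
    have : (μd ∗ₘ μ) ∗ₘ μd = 0 := Measure.map_of_not_aemeasurable hn
    rw [this] at h₂
    exact hμd0 h₂.symm
  -- key inclusion maps
  have hSTS : ∀ x ∈ msupport μ, ∀ t ∈ msupport μd, ∀ y ∈ msupport μ,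
      x * t * y ∈ msupport μ := by
    intro x hx t ht y hy
    have h1 : x * t ∈ msupport (μ ∗ₘ μd) := mem_msupport_mconv μ μd hae1 hx ht
    have h2 : x * t * y ∈ msupport ((μ ∗ₘ μd) ∗ₘ μ) :=
      mem_msupport_mconv (μ ∗ₘ μd) μ hae1' h1 hy
    rwa [h₁] at h2
  have hTST : ∀ x ∈ msupport μd, ∀ t ∈ msupport μ, ∀ y ∈ msupport μd,
      x * t * y ∈ msupport μd := by
    intro x hx t ht y hy
    have h1 : x * t ∈ msupport (μd ∗ₘ μ) := mem_msupport_mconv μd μ hae2 hx ht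
    have h2 : x * t * y ∈ msupport ((μd ∗ₘ μ) ∗ₘ μd) :=
      mem_msupport_mconv (μd ∗ₘ μ) μd hae2' h1 hy
    rwa [h₂] at h2
  -- T ⊆ S
  have hTS : msupport μd ⊆ msupport μ := by
    intro t ht
    have := hSTS 1 he t ht 1 he
    simpa using this
  -- 1 ∈ T
  have heT : (1 : G) ∈ msupport μd := by
    obtain ⟨t, ht⟩ := msupport_nonempty μd
    -- powers of t lie in T
    have hpow : ∀ k : ℕ, t ^ (k + 1) ∈ msupport μd ∧ t ^ (k + 2) ∈ msupport μd := by
      intro k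
      induction k with
      | zero =>
        constructor
        · simpa using ht
        · have := hTST t ht 1 he t ht
          simpa [pow_two] using this
      | succ n ih =>
        refine ⟨ih.2, ?_⟩
        have := hTST t ht (t ^ (n + 1)) (hTS ih.1) t ht
        have h' : t * t ^ (n + 1) * t = t ^ (n + 3) := by
          group
        rwa [h'] at this
    obtain ⟨n, hn, htn⟩ := (isOfFinOrder_iff_pow_eq_one).mp (hfin t (hTS ht))
    rcases Nat.exists_eq_add_of_lt hn with ⟨k, hk⟩
    have : t ^ (k + 1) ∈ msupport μd := (hpow k).1
    rw [show k + 1 = n by omega] at this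
    rwa [htn] at this
  -- S ⊆ T, hence S = T
  have hST : msupport μ ⊆ msupport μd := by
    intro s hs
    have := hTST 1 heT s hs 1 heT
    simpa using this
  have heq : msupport μ = msupport μd := le_antisymm hST hTS
  -- closure under multiplication
  have hmul : ∀ x ∈ msupport μ, ∀ y ∈ msupport μ, x * y ∈ msupport μ := by
    intro x hx y hy
    have := hSTS x hx 1 heT y hy
    simpa using this
  refine ⟨hmul, ?_, heq⟩
  -- closure under inversion
  intro x hx
  obtain ⟨n, hn, hxn⟩ := (isOfFinOrder_iff_pow_eq_one).mp (hfin x hx)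
  have hpowS : ∀ k : ℕ, x ^ (k + 1) ∈ msupport μ := by
    intro k
    induction k with
    | zero => simpa using hx
    | succ m ih =>
      have := hmul _ ih x hx
      rwa [← pow_succ] at this
  rcases n with _ | n
  · omega
  rcases n with _ | n
  · have : x = 1 := by simpa using hxn
    rw [this]
    simpa using he
  · have hmem : x ^ (n + 1) ∈ msupport μ := hpowS n
    have hinv : x⁻¹ = x ^ (n + 1) := by
      have : x ^ (n + 1) * x = 1 := by rw [← pow_succ]; exact hxn
      exact (eq_inv_of_mul_eq_one_left this).symm
    rwa [hinv]
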